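/- For every real G > 0 and every ε ∈ [0, 1/2], the inequality 1 / log(1 + G(1−ε)²/(1+ε)) ≤ 1/log(1+G) + 10 G ε / ( (1+G) (log(1+G))² ) holds. -/

import Mathlib

lemma log_le_pade {x : ℝ} (hx : 0 ≤ x) :
    Real.log (1 + x) ≤ (6*x + x^2) / (6 + 4*x) := by
  set F : ℝ → ℝ := fun y => (6*y + y^2) / (6 + 4*y) - Real.log (1 + y) with hF
  have hd : ∀ y : ℝ, -1 < y →
      HasDerivAt F (4*y^3/((6 + 4*y)^2*(1+y))) y := by
    intro y hy
    have h1 : (0:ℝ) < 1 + y := by linarith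
    have h2 : (6:ℝ) + 4*y ≠ 0 := by nlinarith
    have hlog : HasDerivAt (fun z : ℝ => Real.log (1 + z)) (1/(1+y)) y := by
      have h := (Real.hasDerivAt_log (ne_of_gt h1)).comp y ((hasDerivAt_id y).const_add 1)
      simpa [Function.comp_def] using h
    have hnum : HasDerivAt (fun z : ℝ => 6*z + z^2) (6 + 2*y) y := by
      have h := ((hasDerivAt_id y).const_mul (6:ℝ)).add (hasDerivAt_pow 2 y)
      simpa [Pi.add_def] using h
    have hden : HasDerivAt (fun z : ℝ => 6 + 4*z) (4:ℝ) y := by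
      simpa using ((hasDerivAt_id y).const_mul (4:ℝ)).const_add 6
    have H := (hnum.div hden h2).sub hlog
    convert H using 1
    · rfl
    · rfl
    · rfl
    field_simp
    ring
  have hmono : MonotoneOn F (Set.Ici (0:ℝ)) := by
    apply monotoneOn_of_deriv_nonneg (convex_Ici 0)
    · intro y hy
      have hy' : -1 < y := by simp at hy; linarith
      exact (hd y hy').differentiableAt.continuousAt.continuousWithinAt
    · intro y hy
      rw [interior_Ici] at hy
      have hy' : -1 < y := by simp at hy; linarith
      exact ((hd y hy').differentiableAt).differentiableWithinAt
    · intro y hy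
      rw [interior_Ici] at hy
      have hy0 : (0:ℝ) < y := hy
      rw [(hd y (by linarith)).deriv]
      positivity
  have h0 : F 0 = 0 := by simp [hF]
  have hm := hmono Set.self_mem_Ici (Set.mem_Ici.mpr hx) hx
  rw [h0] at hm
  simp only [hF] at hm
  linarith

lemma pade_le_log {x : ℝ} (hx : 0 ≤ x) :
    (6*x + 3*x^2) / (6 + 6*x + x^2) ≤ Real.log (1 + x) := by
  set F : ℝ → ℝ := fun y => Real.log (1 + y) - (6*y + 3*y^2) / (6 + 6*y + y^2) with hF
  have hd : ∀ y : ℝ, -1 < y →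
      HasDerivAt F (y^4/((1+y)*(6 + 6*y + y^2)^2)) y := by
    intro y hy
    have h1 : (0:ℝ) < 1 + y := by linarith
    have h2' : (0:ℝ) < 6 + 6*y + y^2 := by nlinarith [sq_nonneg (y+3)]
    have h2 : (6:ℝ) + 6*y + y^2 ≠ 0 := ne_of_gt h2'
    have hlog : HasDerivAt (fun z : ℝ => Real.log (1 + z)) (1/(1+y)) y := by
      have h := (Real.hasDerivAt_log (ne_of_gt h1)).comp y ((hasDerivAt_id y).const_add 1)
      simpa [Function.comp_def] using h
    have hnum : HasDerivAt (fun z : ℝ => 6*z + 3*z^2) (6 + 3*(2*y)) y := by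
      have h := ((hasDerivAt_id y).const_mul (6:ℝ)).add ((hasDerivAt_pow 2 y).const_mul 3)
      simpa [Pi.add_def] using h
    have hden : HasDerivAt (fun z : ℝ => 6 + 6*z + z^2) (6 + 2*y) y := by
      have h := (((hasDerivAt_id y).const_mul (6:ℝ)).const_add 6).add (hasDerivAt_pow 2 y)
      simpa [Pi.add_def] using h
    have H := hlog.sub (hnum.div hden h2)
    convert H using 1
    · rfl
    · rfl
    · rfl
    field_simp
    ring
  have hmono : MonotoneOn F (Set.Ici (0:ℝ)) := by
    apply monotoneOn_of_deriv_nonneg (convex_Ici 0)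
    · intro y hy
      have hy' : -1 < y := by simp at hy; linarith
      exact (hd y hy').differentiableAt.continuousAt.continuousWithinAt
    · intro y hy
      rw [interior_Ici] at hy
      have hy' : -1 < y := by simp at hy; linarith
      exact ((hd y hy').differentiableAt).differentiableWithinAt
    · intro y hy
      rw [interior_Ici] at hy
      have hy0 : (0:ℝ) < y := hy
      rw [(hd y (by linarith)).deriv]
      have h2' : (0:ℝ) < 6 + 6*y + y^2 := by nlinarith
      positivity
  have h0 : F 0 = 0 := by simp [hF]
  have hm := hmono Set.self_mem_Ici (Set.mem_Ici.mpr hx) hx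
  rw [h0] at hm
  simp only [hF] at hm
  linarith

set_option maxHeartbeats 1000000 in
lemma key_poly (G ε : ℝ) (hG : 0 < G) (hε : 0 < ε) (hε1 : ε ≤ 1/2) :
    10*G*ε*((G*ε*(3-ε))*(6*(1+ε+G*(1-ε)^2)+G*ε*(3-ε))) ≤
      Real.log (1+G) *
        (10*G*ε*((1+ε+G*(1-ε)^2)*(6*(1+ε+G*(1-ε)^2)+4*(G*ε*(3-ε))))
          - (1+G)*((G*ε*(3-ε))*(6*(1+ε+G*(1-ε)^2)+G*ε*(3-ε)))) := by
  set L := Real.log (1+G) with hLdef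
  have hL0 : 0 < L := Real.log_pos (by linarith)
  have hs : (0:ℝ) ≤ 1 - 2*ε := by linarith
  have hs2 : (0:ℝ) ≤ (1-2*ε)^2 := sq_nonneg _
  have ht1 : (0:ℝ) ≤ (1-2*ε)*(1-(1-2*ε)^2) := by nlinarith
  rcases le_or_gt G 1 with hG1 | hG1
  · -- small G : use Padé lower bound for log (1+G)
    have hpade : (6*G + 3*G^2) / (6 + 6*G + G^2) ≤ L := by
      rw [hLdef]; exact pade_le_log hG.le
    have hB : (0:ℝ) < 6 + 6*G + G^2 := by nlinarith
    have hLb : 6*G + 3*G^2 ≤ L*(6 + 6*G + G^2) := by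
      rw [div_le_iff₀ hB] at hpade; linarith
    have hQ : (0:ℝ) ≤ 252 - 432*ε - 324*ε^2 + 360*ε^3
        + G*(630 - 1710*ε + 1110*ε^2 - 570*ε^3 + 300*ε^4)
        + G^2*(504 - 1719*ε + 2022*ε^2 - 1335*ε^3 + 420*ε^4)
        + G^3*(126 - 441*ε + 498*ε^2 - 345*ε^3 + 110*ε^4) := by
      linarith [ht1, hs, hs2, mul_nonneg hG.le ht1, mul_nonneg hG.le hs,
        mul_nonneg hG.le hs2, mul_nonneg hG.le (sq_nonneg ((1-2*ε)^2)),
        mul_nonneg (sq_nonneg G) (by linarith : (0:ℝ) ≤ 1 - G), sq_nonneg G,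
        mul_nonneg (sq_nonneg G) hs, mul_nonneg (sq_nonneg G) hs2,
        mul_nonneg (sq_nonneg G) (mul_nonneg hs hs2),
        mul_nonneg (sq_nonneg G) (sq_nonneg ((1-2*ε)^2)),
        mul_nonneg (mul_nonneg (mul_nonneg hG.le hG.le) hG.le) hs,
        mul_nonneg (mul_nonneg (mul_nonneg hG.le hG.le) hG.le) hs2,
        mul_nonneg (mul_nonneg (mul_nonneg hG.le hG.le) hG.le) (mul_nonneg hs hs2),
        mul_nonneg (mul_nonneg (mul_nonneg hG.le hG.le) hG.le) (sq_nonneg ((1-2*ε)^2))]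
    -- key cleared inequality
    have h1 : 10*G*ε*((G*ε*(3-ε))*(6*(1+ε+G*(1-ε)^2)+G*ε*(3-ε)))*(6+6*G+G^2) ≤
        (6*G+3*G^2)*(10*G*ε*((1+ε+G*(1-ε)^2)*(6*(1+ε+G*(1-ε)^2)+4*(G*ε*(3-ε))))
          - (1+G)*((G*ε*(3-ε))*(6*(1+ε+G*(1-ε)^2)+G*ε*(3-ε)))) := by
      linarith [mul_nonneg (mul_nonneg (mul_nonneg hG.le hG.le) hε.le) hQ]
    have hDnn : (0:ℝ) ≤ 1+ε+G*(1-ε)^2 := by nlinarith [mul_nonneg hG.le (sq_nonneg (1-ε))]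
    have hyN : (0:ℝ) ≤ G*ε*(3-ε) := by
      have : (0:ℝ) ≤ 3 - ε := by linarith
      positivity
    have h6DN : (0:ℝ) ≤ 6*(1+ε+G*(1-ε)^2)+G*ε*(3-ε) := by linarith
    have h10G : (0:ℝ) ≤ 10*G := by linarith
    have hU0 : (0:ℝ) ≤ 10*G*ε*((G*ε*(3-ε))*(6*(1+ε+G*(1-ε)^2)+G*ε*(3-ε))) := by
      have := mul_nonneg (mul_nonneg h10G hε.le) (mul_nonneg hyN h6DN)
      linarith [this]
    have hp0 : (0:ℝ) < 6*G + 3*G^2 := by nlinarith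
    have hα : (0:ℝ) ≤ 10*G*ε*((1+ε+G*(1-ε)^2)*(6*(1+ε+G*(1-ε)^2)+4*(G*ε*(3-ε))))
          - (1+G)*((G*ε*(3-ε))*(6*(1+ε+G*(1-ε)^2)+G*ε*(3-ε))) := by
      have h0pα : (0:ℝ) ≤ (6*G+3*G^2)*(10*G*ε*((1+ε+G*(1-ε)^2)*(6*(1+ε+G*(1-ε)^2)+4*(G*ε*(3-ε))))
          - (1+G)*((G*ε*(3-ε))*(6*(1+ε+G*(1-ε)^2)+G*ε*(3-ε)))) := by
        linarith [h1, mul_nonneg hU0 hB.le]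
      exact le_of_mul_le_mul_left (by linarith [h0pα]) hp0
    have h2 := mul_le_mul_of_nonneg_right hLb hα
    have h3 : 10*G*ε*((G*ε*(3-ε))*(6*(1+ε+G*(1-ε)^2)+G*ε*(3-ε)))*(6+6*G+G^2) ≤
        (L*(10*G*ε*((1+ε+G*(1-ε)^2)*(6*(1+ε+G*(1-ε)^2)+4*(G*ε*(3-ε))))
          - (1+G)*((G*ε*(3-ε))*(6*(1+ε+G*(1-ε)^2)+G*ε*(3-ε)))))*(6+6*G+G^2) := by
      linarith [h1, h2]
    exact le_of_mul_le_mul_right h3 hB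
  · -- large G : shifted Padé bound
    have hx0 : (0:ℝ) ≤ (G-1)/2 := by linarith
    have hsplit : L = Real.log 2 + Real.log (1 + (G-1)/2) := by
      rw [hLdef, ← Real.log_mul (by norm_num : (2:ℝ) ≠ 0) (by nlinarith : (1:ℝ) + (G-1)/2 ≠ 0)]
      congr 1; ring
    have hlog2 : (693:ℝ)/1000 ≤ Real.log 2 := by
      have := Real.log_two_gt_d9; norm_num at this ⊢; linarith
    have hpade : (6*((G-1)/2) + 3*((G-1)/2)^2) / (6 + 6*((G-1)/2) + ((G-1)/2)^2)
        ≤ Real.log (1 + (G-1)/2) := pade_le_log hx0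
    have hB : (0:ℝ) < 6 + 6*((G-1)/2) + ((G-1)/2)^2 := by nlinarith
    have hLb : 693/1000*(6 + 6*((G-1)/2) + ((G-1)/2)^2) + (6*((G-1)/2) + 3*((G-1)/2)^2)
        ≤ L*(6 + 6*((G-1)/2) + ((G-1)/2)^2) := by
      rw [div_le_iff₀ hB] at hpade
      have hLB : L*(6 + 6*((G-1)/2) + ((G-1)/2)^2) =
          Real.log 2 * (6 + 6*((G-1)/2) + ((G-1)/2)^2)
            + Real.log (1+(G-1)/2) * (6 + 6*((G-1)/2) + ((G-1)/2)^2) := by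
        rw [hsplit]; ring
      have h2B := mul_le_mul_of_nonneg_right hlog2 hB.le
      linarith [hpade, h2B, hLB]
    have hH : (0:ℝ) ≤ G - 1 := by linarith
    have h1 : 10*G*ε*((G*ε*(3-ε))*(6*(1+ε+G*(1-ε)^2)+G*ε*(3-ε)))*(6 + 6*((G-1)/2) + ((G-1)/2)^2) ≤
        (693/1000*(6 + 6*((G-1)/2) + ((G-1)/2)^2) + (6*((G-1)/2) + 3*((G-1)/2)^2))
          *(10*G*ε*((1+ε+G*(1-ε)^2)*(6*(1+ε+G*(1-ε)^2)+4*(G*ε*(3-ε))))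
            - (1+G)*((G*ε*(3-ε))*(6*(1+ε+G*(1-ε)^2)+G*ε*(3-ε)))) := by
      linarith [mul_nonneg (mul_nonneg hε.le (pow_nonneg hH 0)) (pow_nonneg hs 0),
        mul_nonneg (mul_nonneg hε.le (pow_nonneg hH 0)) (pow_nonneg hs 1),
        mul_nonneg (mul_nonneg hε.le (pow_nonneg hH 0)) (pow_nonneg hs 2),
        mul_nonneg (mul_nonneg hε.le (pow_nonneg hH 0)) (pow_nonneg hs 3),
        mul_nonneg (mul_nonneg hε.le (pow_nonneg hH 0)) (pow_nonneg hs 4),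
        mul_nonneg (mul_nonneg hε.le (pow_nonneg hH 1)) (pow_nonneg hs 0),
        mul_nonneg (mul_nonneg hε.le (pow_nonneg hH 1)) (pow_nonneg hs 1),
        mul_nonneg (mul_nonneg hε.le (pow_nonneg hH 1)) (pow_nonneg hs 2),
        mul_nonneg (mul_nonneg hε.le (pow_nonneg hH 1)) (pow_nonneg hs 3),
        mul_nonneg (mul_nonneg hε.le (pow_nonneg hH 1)) (pow_nonneg hs 4),
        mul_nonneg (mul_nonneg hε.le (pow_nonneg hH 2)) (pow_nonneg hs 0),
        mul_nonneg (mul_nonneg hε.le (pow_nonneg hH 2)) (pow_nonneg hs 1),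
        mul_nonneg (mul_nonneg hε.le (pow_nonneg hH 2)) (pow_nonneg hs 2),
        mul_nonneg (mul_nonneg hε.le (pow_nonneg hH 2)) (pow_nonneg hs 3),
        mul_nonneg (mul_nonneg hε.le (pow_nonneg hH 2)) (pow_nonneg hs 4),
        mul_nonneg (mul_nonneg hε.le (pow_nonneg hH 3)) (pow_nonneg hs 0),
        mul_nonneg (mul_nonneg hε.le (pow_nonneg hH 3)) (pow_nonneg hs 1),
        mul_nonneg (mul_nonneg hε.le (pow_nonneg hH 3)) (pow_nonneg hs 2),
        mul_nonneg (mul_nonneg hε.le (pow_nonneg hH 3)) (pow_nonneg hs 3),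
        mul_nonneg (mul_nonneg hε.le (pow_nonneg hH 3)) (pow_nonneg hs 4),
        mul_nonneg (mul_nonneg hε.le (pow_nonneg hH 4)) (pow_nonneg hs 0),
        mul_nonneg (mul_nonneg hε.le (pow_nonneg hH 4)) (pow_nonneg hs 1),
        mul_nonneg (mul_nonneg hε.le (pow_nonneg hH 4)) (pow_nonneg hs 2),
        mul_nonneg (mul_nonneg hε.le (pow_nonneg hH 4)) (pow_nonneg hs 3),
        mul_nonneg (mul_nonneg hε.le (pow_nonneg hH 4)) (pow_nonneg hs 4),
        mul_nonneg (mul_nonneg hε.le (pow_nonneg hH 5)) (pow_nonneg hs 0),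
        mul_nonneg (mul_nonneg hε.le (pow_nonneg hH 5)) (pow_nonneg hs 1),
        mul_nonneg (mul_nonneg hε.le (pow_nonneg hH 5)) (pow_nonneg hs 2),
        mul_nonneg (mul_nonneg hε.le (pow_nonneg hH 5)) (pow_nonneg hs 3),
        mul_nonneg (mul_nonneg hε.le (pow_nonneg hH 5)) (pow_nonneg hs 4)]
    have hDnn : (0:ℝ) ≤ 1+ε+G*(1-ε)^2 := by nlinarith [mul_nonneg hG.le (sq_nonneg (1-ε))]
    have hyN : (0:ℝ) ≤ G*ε*(3-ε) := by
      have : (0:ℝ) ≤ 3 - ε := by linarith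
      positivity
    have h6DN : (0:ℝ) ≤ 6*(1+ε+G*(1-ε)^2)+G*ε*(3-ε) := by linarith
    have h10G : (0:ℝ) ≤ 10*G := by linarith
    have hU0 : (0:ℝ) ≤ 10*G*ε*((G*ε*(3-ε))*(6*(1+ε+G*(1-ε)^2)+G*ε*(3-ε))) := by
      have := mul_nonneg (mul_nonneg h10G hε.le) (mul_nonneg hyN h6DN)
      linarith [this]
    have hp0 : (0:ℝ) < 693/1000*(6 + 6*((G-1)/2) + ((G-1)/2)^2) + (6*((G-1)/2) + 3*((G-1)/2)^2) := by
      nlinarith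
    have hα : (0:ℝ) ≤ 10*G*ε*((1+ε+G*(1-ε)^2)*(6*(1+ε+G*(1-ε)^2)+4*(G*ε*(3-ε))))
          - (1+G)*((G*ε*(3-ε))*(6*(1+ε+G*(1-ε)^2)+G*ε*(3-ε))) := by
      have h0pα : (0:ℝ) ≤ (693/1000*(6 + 6*((G-1)/2) + ((G-1)/2)^2) + (6*((G-1)/2) + 3*((G-1)/2)^2))
          *(10*G*ε*((1+ε+G*(1-ε)^2)*(6*(1+ε+G*(1-ε)^2)+4*(G*ε*(3-ε))))
            - (1+G)*((G*ε*(3-ε))*(6*(1+ε+G*(1-ε)^2)+G*ε*(3-ε)))) := by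
        linarith [h1, mul_nonneg hU0 hB.le]
      exact le_of_mul_le_mul_left (by linarith [h0pα]) hp0
    have h2 := mul_le_mul_of_nonneg_right hLb hα
    have h3 : 10*G*ε*((G*ε*(3-ε))*(6*(1+ε+G*(1-ε)^2)+G*ε*(3-ε)))*(6 + 6*((G-1)/2) + ((G-1)/2)^2) ≤
        (Real.log (1+G) * (10*G*ε*((1+ε+G*(1-ε)^2)*(6*(1+ε+G*(1-ε)^2)+4*(G*ε*(3-ε))))
          - (1+G)*((G*ε*(3-ε))*(6*(1+ε+G*(1-ε)^2)+G*ε*(3-ε)))))*(6 + 6*((G-1)/2) + ((G-1)/2)^2) := by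
      linarith [h1, h2]
    exact le_of_mul_le_mul_right h3 hB

set_option maxHeartbeats 1000000 in
theorem log_expansion_bound (G ε : ℝ) (hG : 0 < G) (hε0 : 0 ≤ ε) (hε1 : ε ≤ 1 / 2) :
    1 / Real.log (1 + G * (1 - ε) ^ 2 / (1 + ε)) ≤
      1 / Real.log (1 + G) + 10 * G * ε / ((1 + G) * (Real.log (1 + G)) ^ 2) := by
  rcases hε0.eq_or_lt with h0 | hε
  · rw [← h0]; norm_num
  have h1e : (0:ℝ) < 1 - ε := by linarith
  have h1pe : (0:ℝ) < 1 + ε := by linarith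
  have hD : (0:ℝ) < 1 + ε + G*(1-ε)^2 := by positivity
  have hA1 : (1:ℝ) < 1 + G * (1 - ε) ^ 2 / (1 + ε) := by
    have : (0:ℝ) < G * (1 - ε) ^ 2 / (1 + ε) := by positivity
    linarith
  have hA0 : (0:ℝ) < 1 + G * (1 - ε) ^ 2 / (1 + ε) := by linarith
  have ht : 0 < Real.log (1 + G * (1 - ε) ^ 2 / (1 + ε)) := Real.log_pos hA1
  have hL : 0 < Real.log (1 + G) := Real.log_pos (by linarith)
  set t := Real.log (1 + G * (1 - ε) ^ 2 / (1 + ε)) with htdef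
  set L := Real.log (1 + G) with hLdef
  -- y and the splitting identity
  have hyN : (0:ℝ) ≤ G*ε*(3-ε) := by
    have : (0:ℝ) ≤ 3 - ε := by linarith
    positivity
  set y := G*ε*(3-ε) / (1 + ε + G*(1-ε)^2) with hydef
  have hy0 : (0:ℝ) ≤ y := by positivity
  have hy1 : (0:ℝ) < 1 + y := by linarith
  have hGA : 1 + G = (1 + G * (1 - ε) ^ 2 / (1 + ε)) * (1 + y) := by
    rw [hydef]; field_simp; ring
  have hLsplit : L = t + Real.log (1 + y) := by
    rw [hLdef, hGA, Real.log_mul hA0.ne' hy1.ne', htdef]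
  have hδ0 : 0 ≤ Real.log (1 + y) := Real.log_nonneg (by linarith)
  -- upper bound log(1+y) in cleared form
  have h6DN : (0:ℝ) < 6*(1 + ε + G*(1-ε)^2) + 4*(G*ε*(3-ε)) := by nlinarith
  have hV : (0:ℝ) < (1 + ε + G*(1-ε)^2)*(6*(1 + ε + G*(1-ε)^2) + 4*(G*ε*(3-ε))) :=
    mul_pos hD h6DN
  have hfrac : (6*y + y^2)/(6 + 4*y) =
      (G*ε*(3-ε))*(6*(1 + ε + G*(1-ε)^2) + G*ε*(3-ε)) /
        ((1 + ε + G*(1-ε)^2)*(6*(1 + ε + G*(1-ε)^2) + 4*(G*ε*(3-ε)))) := by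
    rw [hydef]; field_simp
  have hlogy : Real.log (1 + y) ≤
      (G*ε*(3-ε))*(6*(1 + ε + G*(1-ε)^2) + G*ε*(3-ε)) /
        ((1 + ε + G*(1-ε)^2)*(6*(1 + ε + G*(1-ε)^2) + 4*(G*ε*(3-ε)))) := by
    rw [← hfrac]; exact log_le_pade hy0
  have hδV : Real.log (1 + y) *
      ((1 + ε + G*(1-ε)^2)*(6*(1 + ε + G*(1-ε)^2) + 4*(G*ε*(3-ε)))) ≤
      (G*ε*(3-ε))*(6*(1 + ε + G*(1-ε)^2) + G*ε*(3-ε)) := by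
    rw [← le_div_iff₀ hV]; exact hlogy
  -- key polynomial fact
  have hkey := key_poly G ε hG hε hε1
  rw [← hLdef] at hkey
  -- combine : T
  have hcoef : (0:ℝ) ≤ (1+G)*L + 10*G*ε := by positivity
  have hT' : Real.log (1 + y) * ((1+G)*L + 10*G*ε) *
      ((1 + ε + G*(1-ε)^2)*(6*(1 + ε + G*(1-ε)^2) + 4*(G*ε*(3-ε)))) ≤
      (10*G*ε*L) * ((1 + ε + G*(1-ε)^2)*(6*(1 + ε + G*(1-ε)^2) + 4*(G*ε*(3-ε)))) := by
    have hh := mul_le_mul_of_nonneg_right hδV hcoef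
    nlinarith [hh, hkey]
  have hT : Real.log (1 + y) * ((1+G)*L + 10*G*ε) ≤ 10*G*ε*L :=
    le_of_mul_le_mul_right hT' hV
  -- final conversion
  have ht2 : (1+G)*L^2 ≤ t*((1+G)*L + 10*G*ε) := by nlinarith [hT, hLsplit]
  have hpos : (0:ℝ) < (1+G)*L^2 := by positivity
  have hfin : 1/t ≤ ((1+G)*L + 10*G*ε)/((1+G)*L^2) := by
    rw [div_le_div_iff₀ ht hpos]
    nlinarith [ht2]
  have heq : ((1+G)*L + 10*G*ε)/((1+G)*L^2) = 1/L + 10*G*ε/((1+G)*L^2) := by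
    field_simp
  rw [heq] at hfin
  convert hfin using 2
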